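/- For all indices i, j ∈ {1,…,n} and every polynomial p ∈ ℂ[x₁,…,xₙ], the Dunkl operators commute: D_i(D_j(p)) = D_j(D_i(p)). -/

import Mathlib

open MvPolynomial

namespace DunklAux

variable {n : ℕ}


lemma Xsub_ne_zero {i j : Fin n} (h : i ≠ j) : (X i - X j : MvPolynomial (Fin n) ℂ) ≠ 0 := by
  intro hc
  exact h (MvPolynomial.X_injective (sub_eq_zero.mp hc))

lemma cancel {i j : Fin n} (h : i ≠ j) {q r : MvPolynomial (Fin n) ℂ}
    (hq : (X i - X j) * q = (X i - X j) * r) : q = r :=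
  mul_left_cancel₀ (Xsub_ne_zero h) hq

variable (Δ : Fin n → Fin n → MvPolynomial (Fin n) ℂ → MvPolynomial (Fin n) ℂ)
variable (hΔ : ∀ i j p, (X i - X j) * Δ i j p = rename (Equiv.swap i j) p - p)

include hΔ

lemma delta_unique {i j : Fin n} (h : i ≠ j) {p q : MvPolynomial (Fin n) ℂ}
    (hq : (X i - X j) * q = rename (Equiv.swap i j) p - p) : q = Δ i j p :=
  cancel h (hq.trans (hΔ i j p).symm)

lemma delta_neg {i j : Fin n} (h : i ≠ j) (p : MvPolynomial (Fin n) ℂ) : Δ j i p = - Δ i j p := by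
  refine (delta_unique Δ hΔ h.symm ?_).symm
  rw [Equiv.swap_comm, ← hΔ i j p]; ring

lemma delta_add {i j : Fin n} (h : i ≠ j) (p q : MvPolynomial (Fin n) ℂ) :
    Δ i j (p + q) = Δ i j p + Δ i j q := by
  refine (delta_unique Δ hΔ h ?_).symm
  rw [mul_add, hΔ, hΔ, map_add]; ring

lemma delta_Cmul {i j : Fin n} (h : i ≠ j) (a : ℂ) (p : MvPolynomial (Fin n) ℂ) :
    Δ i j (C a * p) = C a * Δ i j p := by
  refine (delta_unique Δ hΔ h ?_).symm
  rw [mul_left_comm, hΔ, map_mul, rename_C]; ring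

lemma delta_sum {i j : Fin n} (h : i ≠ j) {α : Type*} (s : Finset α) (f : α → MvPolynomial (Fin n) ℂ) :
    Δ i j (∑ k ∈ s, f k) = ∑ k ∈ s, Δ i j (f k) := by
  refine (delta_unique Δ hΔ h ?_).symm
  rw [Finset.mul_sum, map_sum, ← Finset.sum_sub_distrib]
  exact Finset.sum_congr rfl fun k _ => hΔ i j (f k)

lemma rename_delta (e : Equiv.Perm (Fin n)) {i j : Fin n} (h : i ≠ j) (p : MvPolynomial (Fin n) ℂ) :
    rename e (Δ i j p) = Δ (e i) (e j) (rename e p) := by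
  refine delta_unique Δ hΔ (fun hc => h (e.injective hc)) ?_
  have h1 : (X (e i) - X (e j) : MvPolynomial (Fin n) ℂ) = rename e (X i - X j) := by
    simp [map_sub]
  have hfun : (⇑e ∘ ⇑(Equiv.swap i j)) = (⇑(Equiv.swap (e i) (e j)) ∘ ⇑e) := by
    funext x
    simp only [Function.comp_apply]
    rw [Equiv.swap_apply_apply]
    simp [Equiv.Perm.mul_apply]
  rw [h1, ← map_mul, hΔ, map_sub, rename_rename, rename_rename, hfun]


omit hΔ in
lemma pderiv_pderiv_X (i j k : Fin n) :
    pderiv i (pderiv j (X k : MvPolynomial (Fin n) ℂ)) = 0 := by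
  by_cases h : k = j
  · subst h; simp
  · rw [pderiv_X_of_ne h]; simp

omit hΔ in
lemma pderiv_comm' (i j : Fin n) (p : MvPolynomial (Fin n) ℂ) :
    pderiv i (pderiv j p) = pderiv j (pderiv i p) := by
  induction p using MvPolynomial.induction_on with
  | C a => simp
  | add p q hp hq => simp [hp, hq]
  | mul_X p k hp =>
      rw [pderiv_mul, map_add, pderiv_mul, pderiv_mul,
          pderiv_mul, map_add, pderiv_mul, pderiv_mul,
          hp, pderiv_pderiv_X, pderiv_pderiv_X]
      ring

omit hΔ in
lemma pderiv_rename_swap (a b k : Fin n) (p : MvPolynomial (Fin n) ℂ) :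
    pderiv k (rename (Equiv.swap a b) p)
      = rename (Equiv.swap a b) (pderiv (Equiv.swap a b k) p) := by
  conv_lhs => rw [show k = Equiv.swap a b (Equiv.swap a b k) by simp]
  exact pderiv_rename (Equiv.swap a b).injective _ _

lemma delta_sub {i j : Fin n} (h : i ≠ j) (p q : MvPolynomial (Fin n) ℂ) :
    Δ i j (p - q) = Δ i j p - Δ i j q := by
  refine (delta_unique Δ hΔ h ?_).symm
  rw [mul_sub, hΔ, hΔ, map_sub]; ring

lemma delta_neg_arg {i j : Fin n} (h : i ≠ j) (p : MvPolynomial (Fin n) ℂ) :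
    Δ i j (-p) = - Δ i j p := by
  refine (delta_unique Δ hΔ h ?_).symm
  rw [mul_neg, hΔ, map_neg]; ring

lemma pderiv_delta_of_ne {i j k : Fin n} (h : i ≠ j) (hki : k ≠ i) (hkj : k ≠ j)
    (p : MvPolynomial (Fin n) ℂ) :
    pderiv k (Δ i j p) = Δ i j (pderiv k p) := by
  refine cancel h ?_
  have h1 : (X i - X j) * pderiv k (Δ i j p)
      = pderiv k ((X i - X j) * Δ i j p) := by
    rw [pderiv_mul, map_sub, pderiv_X_of_ne hki.symm, pderiv_X_of_ne hkj.symm]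
    ring
  rw [h1, hΔ, map_sub, hΔ, pderiv_rename_swap,
      Equiv.swap_apply_of_ne_of_ne hki hkj]

/-- `(x_i - x_j) * [∂_i, Δ_{ij}] p = s_{ij}(∂_j p - ∂_i p) - Δ_{ij} p` -/
lemma pderiv_delta_i {i j : Fin n} (h : i ≠ j) (p : MvPolynomial (Fin n) ℂ) :
    (X i - X j) * (pderiv i (Δ i j p) - Δ i j (pderiv i p))
      = rename (Equiv.swap i j) (pderiv j p) - rename (Equiv.swap i j) (pderiv i p)
        - Δ i j p := by
  have h1 : pderiv i ((X i - X j) * Δ i j p)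
      = Δ i j p + (X i - X j) * pderiv i (Δ i j p) := by
    rw [pderiv_mul, map_sub, pderiv_X_self, pderiv_X_of_ne (Ne.symm h)]
    ring
  have h2 := congrArg (pderiv i) (hΔ i j p)
  rw [h1, map_sub, pderiv_rename_swap, Equiv.swap_apply_left] at h2
  have h3 := hΔ i j (pderiv i p)
  rw [mul_sub, h3]
  linear_combination h2

lemma pderiv_delta_j {i j : Fin n} (h : i ≠ j) (p : MvPolynomial (Fin n) ℂ) :
    (X i - X j) * (pderiv j (Δ i j p) - Δ i j (pderiv j p))
      = rename (Equiv.swap i j) (pderiv i p) - rename (Equiv.swap i j) (pderiv j p)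
        + Δ i j p := by
  have h1 : pderiv j ((X i - X j) * Δ i j p)
      = - Δ i j p + (X i - X j) * pderiv j (Δ i j p) := by
    rw [pderiv_mul, map_sub, pderiv_X_self, pderiv_X_of_ne h]
    ring
  have h2 := congrArg (pderiv j) (hΔ i j p)
  rw [h1, map_sub, pderiv_rename_swap, Equiv.swap_apply_right] at h2
  have h3 := hΔ i j (pderiv j p)
  rw [mul_sub, h3]
  linear_combination h2

/-- `[∂_i, Δ_{ij}] = -[∂_j, Δ_{ij}]` -/
lemma pderiv_delta_pair {i j : Fin n} (h : i ≠ j) (p : MvPolynomial (Fin n) ℂ) :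
    pderiv i (Δ i j p) - Δ i j (pderiv i p)
      = -(pderiv j (Δ i j p) - Δ i j (pderiv j p)) := by
  refine cancel h ?_
  rw [pderiv_delta_i Δ hΔ h, mul_neg, pderiv_delta_j Δ hΔ h]
  ring

lemma delta_mul_invariant {j l : Fin n} (h : j ≠ l) {f : MvPolynomial (Fin n) ℂ}
    (hf : rename (Equiv.swap j l) f = f) (q : MvPolynomial (Fin n) ℂ) :
    Δ j l (f * q) = f * Δ j l q := by
  refine (delta_unique Δ hΔ h ?_).symm
  rw [mul_left_comm, hΔ, map_mul, hf]; ring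

omit hΔ in
lemma rename_swap_X_of_ne {a b k : Fin n} (hka : k ≠ a) (hkb : k ≠ b) :
    rename (Equiv.swap a b) (X k : MvPolynomial (Fin n) ℂ) = X k := by
  rw [rename_X, Equiv.swap_apply_of_ne_of_ne hka hkb]

lemma delta_comm_disjoint {i k j l : Fin n} (hik : i ≠ k) (hjl : j ≠ l)
    (hij : i ≠ j) (hil : i ≠ l) (hkj : k ≠ j) (hkl : k ≠ l)
    (p : MvPolynomial (Fin n) ℂ) :
    Δ i k (Δ j l p) = Δ j l (Δ i k p) := by
  refine cancel hik ?_
  have hfix : rename (Equiv.swap j l) (X i - X k : MvPolynomial (Fin n) ℂ)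
      = X i - X k := by
    rw [map_sub, rename_swap_X_of_ne hij hil, rename_swap_X_of_ne hkj hkl]
  rw [hΔ, rename_delta Δ hΔ (Equiv.swap i k) hjl,
      Equiv.swap_apply_of_ne_of_ne (Ne.symm hij) (Ne.symm hkj),
      Equiv.swap_apply_of_ne_of_ne (Ne.symm hil) (Ne.symm hkl),
      ← delta_sub Δ hΔ hjl, ← hΔ i k p,
      delta_mul_invariant Δ hΔ hjl hfix]


set_option maxHeartbeats 2000000 in
lemma triple {i j m : Fin n} (hij : i ≠ j) (hjm : j ≠ m) (him : i ≠ m)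
    (p : MvPolynomial (Fin n) ℂ) :
    Δ i j (Δ j m p) - Δ j m (Δ i j p)
      - Δ i m (Δ i j p) + Δ i j (Δ i m p)
      + Δ i m (Δ j m p) - Δ j m (Δ i m p) = 0 := by
  set σ1 := Equiv.swap i j with hσ1
  set σ2 := Equiv.swap j m with hσ2
  set σ3 := Equiv.swap i m with hσ3
  set p1 := rename σ1 p with hp1
  set p2 := rename σ2 p with hp2
  set p3 := rename σ3 p with hp3
  set A := rename σ3 p1 with hA
  set B := rename σ3 p2 with hB
  -- composition identities between the swaps
  have hc1 : ∀ x, σ2 (σ3 x) = σ3 (σ1 x) := by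
    intro x
    simp only [hσ1, hσ2, hσ3, Equiv.swap_apply_def]
    split_ifs <;> simp_all
  have hc2 : ∀ x, σ1 (σ2 x) = σ3 (σ1 x) := by
    intro x
    simp only [hσ1, hσ2, hσ3, Equiv.swap_apply_def]
    split_ifs <;> simp_all
  have hc3 : ∀ x, σ2 (σ1 x) = σ3 (σ2 x) := by
    intro x
    simp only [hσ1, hσ2, hσ3, Equiv.swap_apply_def]
    split_ifs <;> simp_all
  have hc4 : ∀ x, σ1 (σ3 x) = σ3 (σ2 x) := by
    intro x
    simp only [hσ1, hσ2, hσ3, Equiv.swap_apply_def]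
    split_ifs <;> simp_all
  have hrr : ∀ (e f : Equiv.Perm (Fin n)) (q : MvPolynomial (Fin n) ℂ),
      rename e (rename f q) = rename (⇑e ∘ ⇑f) q := by
    intro e f q; rw [rename_rename]
  have hf1 : (⇑σ2 ∘ ⇑σ3 : Fin n → Fin n) = ⇑σ3 ∘ ⇑σ1 := funext fun x => hc1 x
  have hf2 : (⇑σ1 ∘ ⇑σ2 : Fin n → Fin n) = ⇑σ3 ∘ ⇑σ1 := funext fun x => hc2 x
  have hf3 : (⇑σ2 ∘ ⇑σ1 : Fin n → Fin n) = ⇑σ3 ∘ ⇑σ2 := funext fun x => hc3 x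
  have hf4 : (⇑σ1 ∘ ⇑σ3 : Fin n → Fin n) = ⇑σ3 ∘ ⇑σ2 := funext fun x => hc4 x
  have hA2 : rename σ2 p3 = A := by
    rw [hp3, hA, hp1, hrr, hrr, hf1]
  have hA1 : rename σ1 p2 = A := by
    rw [hp2, hA, hp1, hrr, hrr, hf2]
  have hB2 : rename σ2 p1 = B := by
    rw [hp1, hB, hp2, hrr, hrr, hf3]
  have hB1 : rename σ1 p3 = B := by
    rw [hp3, hB, hp2, hrr, hrr, hf4]
  -- swap values
  have s1j : σ1 j = i := Equiv.swap_apply_right i j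
  have s1i : σ1 i = j := Equiv.swap_apply_left i j
  have s1m : σ1 m = m := Equiv.swap_apply_of_ne_of_ne (Ne.symm him) (Ne.symm hjm)
  have s2i : σ2 i = i := Equiv.swap_apply_of_ne_of_ne hij him
  have s2j : σ2 j = m := Equiv.swap_apply_left j m
  have s2m : σ2 m = j := Equiv.swap_apply_right j m
  have s3i : σ3 i = m := Equiv.swap_apply_left i m
  have s3m : σ3 m = i := Equiv.swap_apply_right i m
  have s3j : σ3 j = j := Equiv.swap_apply_of_ne_of_ne (Ne.symm hij) hjm
  have h1 : (X i - X j) * Δ i j p = p1 - p := hΔ i j p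
  have h2 : (X j - X m) * Δ j m p = p2 - p := hΔ j m p
  have h3 : (X i - X m) * Δ i m p = p3 - p := hΔ i m p
  have e1 : (X i - X j) * Δ i j (Δ j m p) = Δ i m p1 - Δ j m p := by
    rw [hΔ, rename_delta Δ hΔ σ1 hjm, s1j, s1m]
  have e1' : (X i - X m) * Δ i m p1 = A - p1 := hΔ i m p1
  have e2 : (X j - X m) * Δ j m (Δ i j p) = Δ i m p2 - Δ i j p := by
    rw [hΔ, rename_delta Δ hΔ σ2 hij, s2i, s2j]
  have e2' : (X i - X m) * Δ i m p2 = B - p2 := hΔ i m p2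
  have e3 : (X i - X m) * Δ i m (Δ i j p) = -Δ j m p3 - Δ i j p := by
    rw [hΔ, rename_delta Δ hΔ σ3 hij, s3i, s3j, delta_neg Δ hΔ hjm, ← hp3]
  have e3' : (X j - X m) * Δ j m p3 = A - p3 := by rw [hΔ, hA2]
  have e4 : (X i - X j) * Δ i j (Δ i m p) = Δ j m p1 - Δ i m p := by
    rw [hΔ, rename_delta Δ hΔ σ1 him, s1i, s1m]
  have e4' : (X j - X m) * Δ j m p1 = B - p1 := by rw [hΔ, hB2]
  have e5 : (X i - X m) * Δ i m (Δ j m p) = -Δ i j p3 - Δ j m p := by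
    rw [hΔ, rename_delta Δ hΔ σ3 hjm, s3j, s3m, delta_neg Δ hΔ hij, ← hp3]
  have e5' : (X i - X j) * Δ i j p3 = B - p3 := by rw [hΔ, hB1]
  have e6 : (X j - X m) * Δ j m (Δ i m p) = Δ i j p2 - Δ i m p := by
    rw [hΔ, rename_delta Δ hΔ σ2 him, s2i, s2m]
  have e6' : (X i - X j) * Δ i j p2 = A - p2 := by rw [hΔ, hA1]
  have hP : ((X i - X j) * ((X j - X m) * (X i - X m)) : MvPolynomial (Fin n) ℂ) ≠ 0 :=
    mul_ne_zero (Xsub_ne_zero hij) (mul_ne_zero (Xsub_ne_zero hjm) (Xsub_ne_zero him))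
  apply mul_left_cancel₀ hP
  rw [mul_zero]
  linear_combination
    ((X j - X m) * (X i - X m)) * e1 + (X j - X m) * e1' - (X i - X m) * h2
    - (((X i - X j) * (X i - X m)) * e2 + (X i - X j) * e2' - (X i - X m) * h1)
    - (((X i - X j) * (X j - X m)) * e3 - (X i - X j) * e3' - (X j - X m) * h1)
    + (((X j - X m) * (X i - X m)) * e4 + (X i - X m) * e4' - (X j - X m) * h3)
    + (((X i - X j) * (X j - X m)) * e5 - (X j - X m) * e5' - (X i - X j) * h2)
    - (((X i - X j) * (X i - X m)) * e6 + (X i - X m) * e6' - (X i - X j) * h3)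

end DunklAux

open DunklAux in
/-- The Dunkl operators
`D_i(p) = ∂p/∂x_i + c·∑_{j≠i} (s_{ij}p − p)/(x_i − x_j)` pairwise commute.
The difference quotient `(s_{ij}p − p)/(x_i − x_j)` is encoded by a function `Δ`
satisfying `(x_i − x_j) * Δ i j p = s_{ij}p − p` (which determines it uniquely for
`i ≠ j`, since `MvPolynomial (Fin n) ℂ` is an integral domain). -/
theorem dunkl_operators_commute (n : ℕ) (hn : 1 ≤ n) (c : ℂ)
    (Δ : Fin n → Fin n → MvPolynomial (Fin n) ℂ → MvPolynomial (Fin n) ℂ)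
    (hΔ : ∀ i j p, (X i - X j) * Δ i j p = rename (Equiv.swap i j) p - p)
    (D : Fin n → MvPolynomial (Fin n) ℂ → MvPolynomial (Fin n) ℂ)
    (hD : ∀ i p, D i p = pderiv i p + C c * ∑ j ∈ Finset.univ.erase i, Δ i j p)
    (i j : Fin n) (p : MvPolynomial (Fin n) ℂ) :
    D i (D j p) = D j (D i p) := by
  by_cases hij : i = j
  · subst hij; rfl
  -- expansion of a double application
  have expand : ∀ a b : Fin n, D a (D b p) = pderiv a (pderiv b p)
      + C c * (∑ l ∈ Finset.univ.erase b, pderiv a (Δ b l p))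
      + C c * (∑ k ∈ Finset.univ.erase a, Δ a k (pderiv b p))
      + C c * C c *
        ∑ k ∈ Finset.univ.erase a, ∑ l ∈ Finset.univ.erase b, Δ a k (Δ b l p) := by
    intro a b
    rw [hD a, hD b]
    have hsum : ∀ k ∈ Finset.univ.erase a,
        Δ a k (pderiv b p + C c * ∑ l ∈ Finset.univ.erase b, Δ b l p)
          = Δ a k (pderiv b p) + C c * ∑ l ∈ Finset.univ.erase b, Δ a k (Δ b l p) := by
      intro k hk
      have hak : a ≠ k := (Finset.ne_of_mem_erase hk).symm
      rw [delta_add Δ hΔ hak, delta_Cmul Δ hΔ hak, delta_sum Δ hΔ hak]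
    rw [Finset.sum_congr rfl hsum, map_add (pderiv a), pderiv_C_mul,
        map_sum (pderiv a), Finset.sum_add_distrib, Finset.mul_sum]
    have h1 : ∑ x ∈ Finset.univ.erase a, C c * ∑ l ∈ Finset.univ.erase b, Δ a x (Δ b l p)
        = C c * ∑ x ∈ Finset.univ.erase a, ∑ l ∈ Finset.univ.erase b, Δ a x (Δ b l p) :=
      (Finset.mul_sum _ _ _).symm
    rw [h1]
    ring
  rw [expand i j, expand j i]
  -- second-order derivative commutes
  have hdd : pderiv i (pderiv j p) = pderiv j (pderiv i p) := pderiv_comm' i j p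
  have hjmem : j ∈ Finset.univ.erase i :=
    Finset.mem_erase.mpr ⟨Ne.symm hij, Finset.mem_univ j⟩
  have himem : i ∈ Finset.univ.erase j :=
    Finset.mem_erase.mpr ⟨hij, Finset.mem_univ i⟩
  -- the mixed ∂/Δ sums
  have hG : (∑ l ∈ Finset.univ.erase j, pderiv i (Δ j l p))
      - (∑ l ∈ Finset.univ.erase j, Δ j l (pderiv i p))
      = pderiv i (Δ j i p) - Δ j i (pderiv i p) := by
    rw [← Finset.sum_sub_distrib]
    refine Finset.sum_eq_single_of_mem i himem ?_
    intro l hl hli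
    have hjl : j ≠ l := (Finset.ne_of_mem_erase hl).symm
    rw [pderiv_delta_of_ne Δ hΔ hjl hij (Ne.symm hli), sub_self]
  have hH : (∑ k ∈ Finset.univ.erase i, pderiv j (Δ i k p))
      - (∑ k ∈ Finset.univ.erase i, Δ i k (pderiv j p))
      = pderiv j (Δ i j p) - Δ i j (pderiv j p) := by
    rw [← Finset.sum_sub_distrib]
    refine Finset.sum_eq_single_of_mem j hjmem ?_
    intro k hk hkj
    have hik : i ≠ k := (Finset.ne_of_mem_erase hk).symm
    rw [pderiv_delta_of_ne Δ hΔ hik (Ne.symm hij) (Ne.symm hkj), sub_self]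
  have hGH : pderiv i (Δ j i p) - Δ j i (pderiv i p)
      = pderiv j (Δ i j p) - Δ i j (pderiv j p) := by
    rw [delta_neg Δ hΔ hij p, delta_neg Δ hΔ hij (pderiv i p), map_neg]
    have := pderiv_delta_pair Δ hΔ hij p
    linear_combination -this
  -- the double Δ sums
  have hDS : (∑ k ∈ Finset.univ.erase i, ∑ l ∈ Finset.univ.erase j, Δ i k (Δ j l p))
      - (∑ k ∈ Finset.univ.erase i, ∑ l ∈ Finset.univ.erase j, Δ j l (Δ i k p))
      = 0 := by
    rw [← Finset.sum_sub_distrib]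
    have hstep : ∀ k ∈ Finset.univ.erase i,
        (∑ l ∈ Finset.univ.erase j, Δ i k (Δ j l p))
          - (∑ l ∈ Finset.univ.erase j, Δ j l (Δ i k p))
        = ∑ l ∈ Finset.univ.erase j, (Δ i k (Δ j l p) - Δ j l (Δ i k p)) :=
      fun _ _ => (Finset.sum_sub_distrib _ _).symm
    rw [Finset.sum_congr rfl hstep]
    set s : Finset (Fin n) := (Finset.univ.erase i).erase j with hs
    have hins_i : Finset.univ.erase i = insert j s := (Finset.insert_erase hjmem).symm
    have hswap : (Finset.univ.erase j).erase i = s := Finset.erase_right_comm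
    have hins_j : Finset.univ.erase j = insert i s := by
      rw [← Finset.insert_erase himem, hswap]
    have hinotS : i ∉ s := by
      intro h
      exact (Finset.mem_erase.mp (Finset.mem_erase.mp h).2).1 rfl
    have hjnotS : j ∉ s := fun h => (Finset.mem_erase.mp h).1 rfl
    have hmem_s : ∀ m ∈ s, m ≠ i ∧ m ≠ j := by
      intro m hm
      exact ⟨(Finset.mem_erase.mp (Finset.mem_erase.mp hm).2).1,
        (Finset.mem_erase.mp hm).1⟩
    -- the diagonal term vanishes
    have hFji : Δ i j (Δ j i p) - Δ j i (Δ i j p) = 0 := by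
      rw [delta_neg Δ hΔ hij p, delta_neg Δ hΔ hij (Δ i j p),
          delta_neg_arg Δ hΔ hij]
      ring
    -- inner sums for k = m ∈ s
    have hinner : ∀ m ∈ s,
        (∑ l ∈ Finset.univ.erase j, (Δ i m (Δ j l p) - Δ j l (Δ i m p)))
          = (Δ i m (Δ j i p) - Δ j i (Δ i m p))
            + (Δ i m (Δ j m p) - Δ j m (Δ i m p)) := by
      intro m hm
      obtain ⟨hmi, hmj⟩ := hmem_s m hm
      rw [hins_j, Finset.sum_insert hinotS]
      congr 1
      refine Finset.sum_eq_single_of_mem m hm ?_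
      intro l hl hlm
      obtain ⟨hli, hlj⟩ := hmem_s l hl
      rw [delta_comm_disjoint Δ hΔ (Ne.symm hmi) (Ne.symm hlj) hij (Ne.symm hli)
          hmj (Ne.symm hlm) p, sub_self]
    rw [hins_i, Finset.sum_insert hjnotS, Finset.sum_congr rfl hinner, hins_j,
        Finset.sum_insert hinotS, hFji, zero_add, ← Finset.sum_add_distrib]
    refine Finset.sum_eq_zero ?_
    intro m hm
    obtain ⟨hmi, hmj⟩ := hmem_s m hm
    have htr := triple Δ hΔ hij (Ne.symm hmj) (Ne.symm hmi) p
    rw [delta_neg Δ hΔ hij p, delta_neg Δ hΔ hij (Δ i m p),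
        delta_neg_arg Δ hΔ (Ne.symm hmi)]
    linear_combination htr
  have hcomm : (∑ k ∈ Finset.univ.erase j, ∑ l ∈ Finset.univ.erase i, Δ j k (Δ i l p))
      = ∑ k ∈ Finset.univ.erase i, ∑ l ∈ Finset.univ.erase j, Δ j l (Δ i k p) := by
    rw [Finset.sum_comm]
  linear_combination hdd + C c * hG - C c * hH + C c * hGH + C c * C c * hDS
    - C c * C c * hcomm
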